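/- arXiv:math-ph/0406042 — 4 statements merged into one kernel-verified Lean document; each statement's English description precedes it below -/
import Mathlib

section
/- The Santos polynomials satisfy the recursion S_{n+1}(q) = S_n(q) + q^{n+1} T_n(q) and T_{n+1}(q) = q^n S_n(q) + T_n(q), with initial conditions S_0(q) = 1 and T_0(q) = 0. -/
noncomputable section

/-- The Gaussian ($q$-binomial) coefficient $\binom{n}{k}_q$, defined by the Pascal-type
recursion $\binom{n+1}{k+1}_q = q^{k+1}\binom{n}{k+1}_q + \binom{n}{k}_q$. -/
def gauss {R : Type*} [CommRing R] (q : R) : ℕ → ℕ → R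
  | _, 0 => 1
  | 0, _ + 1 => 0
  | n + 1, k + 1 => q ^ (k + 1) * gauss q n (k + 1) + gauss q n k

/-- The Santos polynomial $S_n(q) = \sum_{k=0}^{\lfloor n/2\rfloor} q^{2k^2}\binom{n}{2k}_q$. -/
def santosS {R : Type*} [CommRing R] (q : R) (n : ℕ) : R :=
  ∑ k ∈ Finset.range (n / 2 + 1), q ^ (2 * k ^ 2) * gauss q n (2 * k)

/-- The Santos polynomial
$T_n(q) = \sum_{k=0}^{\lfloor (n-1)/2\rfloor} q^{2k(k+1)}\binom{n}{2k+1}_q$. -/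
def santosT {R : Type*} [CommRing R] (q : R) (n : ℕ) : R :=
  ∑ k ∈ Finset.range ((n - 1) / 2 + 1), q ^ (2 * k * (k + 1)) * gauss q n (2 * k + 1)

lemma gauss_zero_right {R : Type*} [CommRing R] (q : R) (n : ℕ) : gauss q n 0 = 1 := by
  cases n <;> rfl

lemma gauss_succ {R : Type*} [CommRing R] (q : R) (n k : ℕ) :
    gauss q (n + 1) (k + 1) = q ^ (k + 1) * gauss q n (k + 1) + gauss q n k := rfl

lemma gauss_eq_zero {R : Type*} [CommRing R] (q : R) : ∀ {n k : ℕ}, n < k → gauss q n k = 0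
  | 0, _ + 1, _ => rfl
  | n + 1, k + 1, h => by
      rw [gauss_succ, gauss_eq_zero q (show n < k + 1 by omega),
        gauss_eq_zero q (show n < k by omega)]
      ring

lemma gauss_pascal' {R : Type*} [CommRing R] (q : R) :
    ∀ L m k, m + k = L →
      gauss q (L + 1) (k + 1) = gauss q L (k + 1) + q ^ m * gauss q L k := by
  intro L
  induction L with
  | zero =>
      intro m k h
      obtain ⟨rfl, rfl⟩ : m = 0 ∧ k = 0 := by omega
      have hz : gauss q 0 (0 + 1) = 0 := gauss_eq_zero q (by omega)
      linear_combination gauss_succ q 0 0 + (q ^ (0 + 1) - 1) * hz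
  | succ L ih =>
      intro m k h
      match k with
      | 0 =>
          obtain rfl : m = L + 1 := by omega
          have hih := ih L 0 (by omega)
          have d0 := gauss_succ q (L + 1) 0
          have dr := gauss_succ q L 0
          have zr1 := gauss_zero_right q (L + 1)
          have zr2 := gauss_zero_right q L
          linear_combination d0 + q * hih - dr + (1 - q ^ (L + 1)) * (zr1 - zr2)
      | j + 1 =>
          match m with
          | 0 =>
              have d0 := gauss_succ q (L + 1) (j + 1)
              have hz : gauss q (L + 1) (j + 1 + 1) = 0 := gauss_eq_zero q (by omega)
              linear_combination d0 + (q ^ (j + 1 + 1) - 1) * hz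
          | m' + 1 =>
              have d0 := gauss_succ q (L + 1) (j + 1)
              have h1 := ih m' (j + 1) (by omega)
              have h2 := ih (m' + 1) j (by omega)
              have d1 := gauss_succ q L j
              have d2 := gauss_succ q L (j + 1)
              linear_combination d0 + q ^ (j + 1 + 1) * h1 + h2 - d2 - q ^ (m' + 1) * d1

lemma santosS_ext {R : Type*} [CommRing R] (q : R) (n M : ℕ) (h : n / 2 + 1 ≤ M) :
    santosS q n = ∑ k ∈ Finset.range M, q ^ (2 * k ^ 2) * gauss q n (2 * k) := by
  rw [santosS]
  apply Finset.sum_subset (Finset.range_subset_range.2 h)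
  intro k _ hk
  simp only [Finset.mem_range, not_lt] at hk
  rw [gauss_eq_zero q (show n < 2 * k by omega)]
  ring

lemma santosT_ext {R : Type*} [CommRing R] (q : R) (n M : ℕ) (h : (n - 1) / 2 + 1 ≤ M) :
    santosT q n = ∑ k ∈ Finset.range M, q ^ (2 * k * (k + 1)) * gauss q n (2 * k + 1) := by
  rw [santosT]
  apply Finset.sum_subset (Finset.range_subset_range.2 h)
  intro k _ hk
  simp only [Finset.mem_range, not_lt] at hk
  rw [gauss_eq_zero q (show n < 2 * k + 1 by omega)]
  ring

/-- The Santos polynomials satisfy $S_{n+1} = S_n + q^{n+1} T_n$, $T_{n+1} = q^n S_n + T_n$,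
with $S_0 = 1$, $T_0 = 0$. -/
theorem santos_recursion {R : Type*} [CommRing R] (q : R) (n : ℕ) :
    santosS q (n + 1) = santosS q n + q ^ (n + 1) * santosT q n ∧
    santosT q (n + 1) = q ^ n * santosS q n + santosT q n ∧
    santosS q 0 = 1 ∧ santosT q 0 = 0 := by
  refine ⟨?_, ?_, ?_, ?_⟩
  · -- S recursion
    rw [santosS_ext q (n + 1) (n + 3) (by omega), santosS_ext q n (n + 3) (by omega),
      santosT_ext q n (n + 2) (by omega)]
    rw [Finset.sum_range_succ' (fun k => q ^ (2 * k ^ 2) * gauss q (n + 1) (2 * k)) (n + 2),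
      Finset.sum_range_succ' (fun k => q ^ (2 * k ^ 2) * gauss q n (2 * k)) (n + 2)]
    have key : ∀ k ∈ Finset.range (n + 2),
        q ^ (2 * (k + 1) ^ 2) * gauss q (n + 1) (2 * (k + 1)) =
          q ^ (2 * (k + 1) ^ 2) * gauss q n (2 * (k + 1)) +
            q ^ (n + 1) * (q ^ (2 * k * (k + 1)) * gauss q n (2 * k + 1)) := by
      intro k _
      by_cases hk : 2 * k + 1 ≤ n
      · obtain ⟨m, rfl⟩ : ∃ m, n = 2 * k + 1 + m := ⟨n - (2 * k + 1), by omega⟩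
        have hp := gauss_pascal' q (2 * k + 1 + m) m (2 * k + 1) (by omega)
        have h2 : 2 * (k + 1) = 2 * k + 1 + 1 := by ring
        rw [h2]
        have e : q ^ (2 * (k + 1) ^ 2) * q ^ m =
            q ^ (2 * k + 1 + m + 1) * q ^ (2 * k * (k + 1)) := by
          rw [← pow_add, ← pow_add]; congr 1; ring
        linear_combination q ^ (2 * (k + 1) ^ 2) * hp +
          gauss q (2 * k + 1 + m) (2 * k + 1) * e
      · rw [gauss_eq_zero q (show n + 1 < 2 * (k + 1) by omega),
          gauss_eq_zero q (show n < 2 * (k + 1) by omega),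
          gauss_eq_zero q (show n < 2 * k + 1 by omega)]
        ring
    rw [Finset.sum_congr rfl key, Finset.sum_add_distrib, ← Finset.mul_sum]
    simp only [Nat.mul_zero, gauss_zero_right]
    ring
  · -- T recursion
    rw [santosT_ext q (n + 1) (n + 2) (by omega), santosT_ext q n (n + 2) (by omega),
      santosS_ext q n (n + 2) (by omega)]
    have key : ∀ k ∈ Finset.range (n + 2),
        q ^ (2 * k * (k + 1)) * gauss q (n + 1) (2 * k + 1) =
          q ^ n * (q ^ (2 * k ^ 2) * gauss q n (2 * k)) +
            q ^ (2 * k * (k + 1)) * gauss q n (2 * k + 1) := by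
      intro k _
      by_cases hk : 2 * k ≤ n
      · obtain ⟨m, rfl⟩ : ∃ m, n = 2 * k + m := ⟨n - 2 * k, by omega⟩
        have hp := gauss_pascal' q (2 * k + m) m (2 * k) (by omega)
        have e : q ^ (2 * k * (k + 1)) * q ^ m = q ^ (2 * k + m) * q ^ (2 * k ^ 2) := by
          rw [← pow_add, ← pow_add]; congr 1; ring
        linear_combination q ^ (2 * k * (k + 1)) * hp + gauss q (2 * k + m) (2 * k) * e
      · rw [gauss_eq_zero q (show n + 1 < 2 * k + 1 by omega),
          gauss_eq_zero q (show n < 2 * k by omega),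
          gauss_eq_zero q (show n < 2 * k + 1 by omega)]
        ring
    rw [Finset.sum_congr rfl key, Finset.sum_add_distrib, ← Finset.mul_sum]
  · rw [santosS, Finset.sum_range_one]
    simp only [Nat.mul_zero, gauss_zero_right, pow_zero, one_mul]
    norm_num
  · rw [santosT, Finset.sum_range_one]
    rw [gauss_eq_zero q (show 0 < 2 * 0 + 1 by omega)]
    ring
end
end

section
/- The Euler identity holds: \sum_{n=0}^{\infty} \frac{q^{n(n-1)/2}}{(q;q)_n} z^n = (-z;q)_{\infty} as formal power series. -/
noncomputable section

/-- The product (coefficientwise) topology on formal power series. -/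
instance powerSeriesTopology {R : Type*} [Semiring R] [TopologicalSpace R] :
    TopologicalSpace (PowerSeries R) :=
  TopologicalSpace.induced (fun f (n : ℕ) => (PowerSeries.coeff (R := R) n) f) Pi.topologicalSpace

/-- The $q$-Pochhammer symbol $(a;q)_n = \prod_{j=1}^{n}(1 - a q^{j-1})$. -/
def qPoch {R : Type*} [CommRing R] (a q : R) (n : ℕ) : R :=
  ∏ k ∈ Finset.range n, (1 - a * q ^ k)

/-- Formal power series in `z` (outer variable) over formal power series in `q`
(inner variable); i.e. formal power series in `q` and `z`. -/
abbrev R2 : Type := PowerSeries (PowerSeries ℚ)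

/-- The variable `z`. -/
def Z : R2 := PowerSeries.X

namespace EulerAux

open Finset Filter PowerSeries

abbrev Q : Type := PowerSeries ℚ

abbrev u (n : ℕ) : Q := qPoch (X : Q) X n

lemma u_zero : u 0 = 1 := by simp [u, qPoch]

lemma usucc (n : ℕ) : u (n + 1) = u n * (1 - (X : Q) ^ (n + 1)) := by
  simp only [u, qPoch, prod_range_succ, ← pow_succ']

lemma hu (n : ℕ) : constantCoeff (R := ℚ) (u n) = 1 := by
  simp [u, qPoch, map_prod]

lemma une (n : ℕ) : u n ≠ 0 := by
  intro h
  have := hu n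
  rw [h, map_zero] at this
  exact zero_ne_one this

lemma huv (n : ℕ) : u n * (u n)⁻¹ = 1 :=
  PowerSeries.mul_inv_cancel _ (by rw [hu]; exact one_ne_zero)

lemma uadd (a b : ℕ) :
    u (a + b) = u a * ∏ k ∈ range b, (1 - (X : Q) ^ (a + k + 1)) := by
  simp only [u, qPoch, prod_range_add]
  congr 1
  refine prod_congr rfl fun k _ => ?_
  rw [← pow_succ']

lemma tri (k : ℕ) : (k + 1) * ((k + 1) - 1) / 2 = k * (k - 1) / 2 + k := by
  rw [← Finset.sum_range_id (k + 1), ← Finset.sum_range_id k, Finset.sum_range_succ]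

lemma dvd_prod_sub_one {α : Type*} [CommRing α] {ι : Type*} {d : α} {S : Finset ι}
    {g : ι → α} (h : ∀ i ∈ S, d ∣ g i - 1) : d ∣ (∏ i ∈ S, g i) - 1 := by
  classical
  induction S using Finset.induction_on with
  | empty => simp
  | @insert a S ha ih =>
    rw [prod_insert ha]
    have h1 := h a (mem_insert_self a S)
    have h2 : d ∣ (∏ i ∈ S, g i) - 1 := ih fun i hi => h i (mem_insert_of_mem hi)
    have key : g a * (∏ i ∈ S, g i) - 1
        = (g a - 1) * (∏ i ∈ S, g i) + ((∏ i ∈ S, g i) - 1) := by ring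
    rw [key]
    exact dvd_add (h1.mul_right _) h2

/-- The coefficient of the claimed sum. -/
def c (n : ℕ) : Q := (X : Q) ^ (n * (n - 1) / 2) * (qPoch (X : Q) X n)⁻¹

/-- The claimed common value. -/
def G : R2 := PowerSeries.mk c

def fz (k : ℕ) : R2 := 1 + PowerSeries.C (R := Q) ((X : Q) ^ k) * Z

def P (N : ℕ) : R2 := ∏ i ∈ range N, fz i

abbrev A (N p : ℕ) : Q := PowerSeries.coeff (R := Q) p (P N)

lemma hA0 (N : ℕ) : A N 0 = 1 := by
  simp only [A, P, coeff_zero_eq_constantCoeff, map_prod]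
  refine prod_eq_one fun i _ => ?_
  simp [fz, Z]

lemma Arec (N q : ℕ) : A (N + 1) (q + 1) = A N (q + 1) + A N q * (X : Q) ^ N := by
  simp only [A, P, prod_range_succ, fz]
  rw [mul_add, mul_one, map_add]
  congr 1
  rw [Z, ← mul_assoc, PowerSeries.coeff_succ_mul_X, PowerSeries.coeff_mul_C]

lemma claim (N : ℕ) : ∀ p : ℕ,
    A N p * (u p * u (N - p)) =
      if p ≤ N then (X : Q) ^ (p * (p - 1) / 2) * u N else 0 := by
  induction N with
  | zero =>
    intro p
    cases p with
    | zero => simp [hA0, u_zero]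
    | succ q =>
      rw [if_neg (by omega)]
      have hz : A 0 (q + 1) = 0 := by
        simp [A, P, PowerSeries.coeff_one]
      rw [hz, zero_mul]
  | succ N ih =>
    intro p
    cases p with
    | zero => simp [hA0, u_zero]
    | succ q =>
      rw [Arec]
      by_cases hqN : q + 1 ≤ N
      · obtain ⟨d, rfl⟩ : ∃ d, N = q + 1 + d := ⟨N - (q + 1), by omega⟩
        have IH1 := ih (q + 1)
        have IH2 := ih q
        rw [if_pos (by omega)] at IH1 IH2
        rw [if_pos (by omega)]
        have e1 : q + 1 + d - (q + 1) = d := by omega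
        have e2 : q + 1 + d - q = d + 1 := by omega
        have e3 : q + 1 + d + 1 - (q + 1) = d + 1 := by omega
        rw [e1] at IH1
        rw [e2] at IH2
        rw [e3]
        have hE : (q + 1) * ((q + 1) - 1) / 2 = q * (q - 1) / 2 + q := tri q
        rw [hE] at IH1 ⊢
        rw [usucc (q + 1 + d)]
        have r1 : u (d + 1) = u d * (1 - (X : Q) ^ (d + 1)) := usucc d
        have r3 : u (q + 1) = u q * (1 - (X : Q) ^ (q + 1)) := usucc q
        rw [r3] at IH1 ⊢
        rw [r1] at IH2 ⊢
        linear_combination (1 - (X : Q) ^ (d + 1)) * IH1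
          + (X : Q) ^ (q + 1 + d) * (1 - (X : Q) ^ (q + 1)) * IH2
      · by_cases hq2 : q ≤ N
        · have hq : q = N := by omega
          subst hq
          have h1 := ih (q + 1)
          rw [if_neg (by omega)] at h1
          have hz1 : A q (q + 1) = 0 :=
            (mul_eq_zero.mp h1).resolve_right (mul_ne_zero (une _) (une _))
          have h2 := ih q
          rw [if_pos le_rfl] at h2
          have hz2 : A q q = (X : Q) ^ (q * (q - 1) / 2) := by
            rw [Nat.sub_self, u_zero, mul_one] at h2
            exact mul_right_cancel₀ (une q) h2
          rw [hz1, hz2, if_pos le_rfl, zero_add]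
          have e4 : q + 1 - (q + 1) = 0 := by omega
          rw [e4, u_zero, mul_one, tri q, pow_add, usucc q]
        · rw [if_neg (by omega)]
          have h1 := ih (q + 1)
          rw [if_neg (by omega)] at h1
          have h2 := ih q
          rw [if_neg (by omega)] at h2
          have hz1 : A N (q + 1) = 0 :=
            (mul_eq_zero.mp h1).resolve_right (mul_ne_zero (une _) (une _))
          have hz2 : A N q = 0 :=
            (mul_eq_zero.mp h2).resolve_right (mul_ne_zero (une _) (une _))
          rw [hz1, hz2]
          ring

lemma coeff_prod_eq (m j : ℕ) {s : Finset ℕ} (hs : range (m + j + 1) ⊆ s) :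
    PowerSeries.coeff (R := ℚ) j (PowerSeries.coeff (R := Q) m (∏ i ∈ s, fz i)) =
      PowerSeries.coeff (R := ℚ) j (c m) := by
  set N := m + j + 1 with hN
  rw [← Finset.prod_sdiff hs]
  have htail : (PowerSeries.C (R := Q) ((X : Q) ^ N)) ∣ (∏ i ∈ s \ range N, fz i) - 1 := by
    apply dvd_prod_sub_one
    intro i hi
    have hiN : N ≤ i := by
      have := (Finset.mem_sdiff.mp hi).2
      simpa using this
    have hfz : fz i - 1 =
        PowerSeries.C (R := Q) ((X : Q) ^ N) * (PowerSeries.C (R := Q) ((X : Q) ^ (i - N)) * Z) := by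
      simp only [fz]
      rw [add_sub_cancel_left, ← mul_assoc, ← map_mul, ← pow_add,
        Nat.add_sub_cancel' hiN]
    rw [hfz]
    exact Dvd.intro _ rfl
  obtain ⟨e, he⟩ := htail
  have hsplit : ∏ i ∈ s \ range N, fz i = 1 + PowerSeries.C (R := Q) ((X : Q) ^ N) * e := by
    rw [← he]; ring
  rw [hsplit, add_mul, one_mul, map_add, map_add, mul_assoc,
    PowerSeries.coeff_C_mul]
  have hz : PowerSeries.coeff (R := ℚ) j ((X : Q) ^ N * PowerSeries.coeff (R := Q) m (e * ∏ i ∈ range N, fz i)) = 0 := by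
    refine PowerSeries.X_pow_dvd_iff.mp (dvd_mul_right _ _) j (by omega)
  rw [hz, add_zero]
  -- now relate `A N m` with `c m`
  have hm : m ≤ N := by omega
  have hC := claim N m
  rw [if_pos hm] at hC
  have hc : c m * (u m * u (N - m)) = (X : Q) ^ (m * (m - 1) / 2) * u (N - m) := by
    simp only [c]
    linear_combination ((X : Q) ^ (m * (m - 1) / 2) * u (N - m)) * huv m
  have hN' : N - m + m = N := by omega
  have hw := uadd (N - m) m
  rw [hN'] at hw
  have hdvd : (X : Q) ^ (j + 1) ∣ (∏ k ∈ range m, (1 - (X : Q) ^ (N - m + k + 1))) - 1 := by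
    apply dvd_prod_sub_one
    intro k _
    have : (1 - (X : Q) ^ (N - m + k + 1)) - 1 = -((X : Q) ^ (N - m + k + 1)) := by ring
    rw [this]
    exact Dvd.dvd.neg_right (pow_dvd_pow _ (by omega))
  have hUnit : IsUnit (u m * u (N - m)) := by
    refine IsUnit.mul ?_ ?_ <;>
      · rw [PowerSeries.isUnit_iff_constantCoeff, hu]; exact isUnit_one
  have hkey : (X : Q) ^ (j + 1) ∣ A N m - c m := by
    rw [← hUnit.dvd_mul_right]
    have heq : (A N m - c m) * (u m * u (N - m)) =
        (X : Q) ^ (m * (m - 1) / 2) *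
          (u (N - m) * ((∏ k ∈ range m, (1 - (X : Q) ^ (N - m + k + 1))) - 1)) := by
      rw [sub_mul, hC, hc, hw]; ring
    rw [heq]
    exact ((hdvd.mul_left _).mul_left _)
  have hco := PowerSeries.X_pow_dvd_iff.mp hkey j (lt_add_one j)
  rw [map_sub] at hco
  have := sub_eq_zero.mp hco
  exact this

lemma tendsto_coeffwise {σ : Type*} {l : Filter σ} {F : σ → R2} {g : R2}
    (h : ∀ m j, Tendsto (fun i => PowerSeries.coeff (R := ℚ) j (PowerSeries.coeff (R := Q) m (F i))) l
      (nhds (PowerSeries.coeff (R := ℚ) j (PowerSeries.coeff (R := Q) m g)))) :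
    Tendsto F l (nhds g) := by
  have hn : (nhds g : Filter R2) =
      Filter.comap (fun f (n : ℕ) => PowerSeries.coeff (R := Q) n f)
        (nhds (fun n => PowerSeries.coeff (R := Q) n g)) := nhds_induced _ g
  rw [hn, tendsto_comap_iff]
  rw [tendsto_pi_nhds]
  intro m
  have hn2 : (nhds (PowerSeries.coeff (R := Q) m g) : Filter Q) =
      Filter.comap (fun f (n : ℕ) => PowerSeries.coeff (R := ℚ) n f)
        (nhds (fun n => PowerSeries.coeff (R := ℚ) n (PowerSeries.coeff (R := Q) m g))) :=
    nhds_induced _ _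
  rw [show (fun f => (fun n => PowerSeries.coeff (R := Q) n f)) ∘ F = fun i => (fun n => PowerSeries.coeff (R := Q) n (F i)) from rfl]
  simp only []
  rw [hn2, tendsto_comap_iff, tendsto_pi_nhds]
  intro j
  exact h m j

lemma t2_powerSeries {R : Type*} [Semiring R] [TopologicalSpace R] [T2Space R] :
    T2Space (PowerSeries R) := by
  apply T2Space.of_injective_continuous
    (f := fun f (n : ℕ) => (PowerSeries.coeff (R := R) n) f)
  · intro a b hab
    ext n
    exact congrFun hab n
  · exact continuous_induced_dom

instance : T2Space Q := t2_powerSeries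

instance : T2Space R2 := t2_powerSeries

lemma hasSum :
    HasSum (fun n : ℕ =>
      PowerSeries.C (R := Q) ((X : Q) ^ (n * (n - 1) / 2) * (qPoch (X : Q) X n)⁻¹) * Z ^ n) G := by
  show Tendsto _ atTop _
  apply tendsto_coeffwise
  intro m j
  have hG : PowerSeries.coeff (R := ℚ) j (PowerSeries.coeff (R := Q) m G) = PowerSeries.coeff (R := ℚ) j (c m) := by
    rw [G, coeff_mk]
  rw [hG]
  have hterm : ∀ s : Finset ℕ,
      PowerSeries.coeff (R := ℚ) j (PowerSeries.coeff (R := Q) m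
        (∑ i ∈ s, PowerSeries.C (R := Q) ((X : Q) ^ (i * (i - 1) / 2) * (qPoch (X : Q) X i)⁻¹) * Z ^ i)) =
      ∑ i ∈ s, (if i = m then PowerSeries.coeff (R := ℚ) j (c m) else 0) := by
    intro s
    rw [map_sum, map_sum]
    refine sum_congr rfl fun i _ => ?_
    rw [show (Z : R2) ^ i = X ^ i from by rw [Z]]
    rw [PowerSeries.coeff_C_mul_X_pow]
    by_cases h : i = m
    · subst h
      simp [c]
    · rw [if_neg (fun hmi => h hmi.symm), if_neg h, map_zero]
  have h2 : HasSum (fun i => if i = m then PowerSeries.coeff (R := ℚ) j (c m) else 0)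
      (PowerSeries.coeff (R := ℚ) j (c m)) := hasSum_ite_eq m _
  exact Filter.Tendsto.congr (fun s => (hterm s).symm) h2

lemma hasProd :
    HasProd (fun k : ℕ => 1 + PowerSeries.C (R := Q) ((X : Q) ^ k) * Z) G := by
  show Tendsto _ atTop _
  apply tendsto_coeffwise
  intro m j
  have hG : PowerSeries.coeff (R := ℚ) j (PowerSeries.coeff (R := Q) m G) = PowerSeries.coeff (R := ℚ) j (c m) := by
    rw [G, coeff_mk]
  rw [hG]
  refine Filter.Tendsto.congr' ?_ tendsto_const_nhds
  rw [Filter.EventuallyEq, eventually_atTop]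
  exact ⟨range (m + j + 1), fun s hs => (coeff_prod_eq m j hs).symm⟩

end EulerAux

/-- The Euler identity
$\sum_{n\ge 0} \frac{q^{n(n-1)/2}}{(q;q)_n} z^n = (-z;q)_\infty = \prod_{k\ge 0}(1+zq^k)$,
as formal power series in `q` and `z`. -/
theorem euler_identity :
    ∑' n : ℕ,
        PowerSeries.C (R := PowerSeries ℚ)
          ((PowerSeries.X : PowerSeries ℚ) ^ (n * (n - 1) / 2) *
            (qPoch (PowerSeries.X : PowerSeries ℚ) PowerSeries.X n)⁻¹) * Z ^ n =
      ∏' k : ℕ,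
        (1 + PowerSeries.C (R := PowerSeries ℚ) ((PowerSeries.X : PowerSeries ℚ) ^ k) * Z) := by
  rw [EulerAux.hasSum.tsum_eq, EulerAux.hasProd.tprod_eq]
end
end

section
/- The q-difference equations H^{(0)}(x) = 1 - q^2 x^3 - q^3 x^4 H^{(1)}(q x) and H^{(1)}(x) = 1 - q x^3 - q^6 x^8 H^{(0)}(q x) hold. -/
noncomputable section

/-- Formal power series in `x` (outer variable) over formal power series in `q`
(inner variable); i.e. formal power series in `q` and `x`. -/
abbrev Rqx : Type := PowerSeries (PowerSeries ℚ)

/-- The variable `x`. -/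
def Xx : Rqx := PowerSeries.X

/-- The variable `q`, viewed as a constant (in `x`) power series. -/
def Qc : Rqx := PowerSeries.C (R := PowerSeries ℚ) PowerSeries.X

/-- The period-24 function `χ₂₄⁽⁰⁾`: value 1 at `n ≡ 5, 19`, `-1` at `n ≡ 11, 13 (mod 24)`. -/
def chi0 (n : ℕ) : ℤ :=
  if n % 24 = 5 ∨ n % 24 = 19 then 1 else if n % 24 = 11 ∨ n % 24 = 13 then -1 else 0

/-- The period-24 function `χ₂₄⁽¹⁾`: value 1 at `n ≡ 1, 23`, `-1` at `n ≡ 7, 17 (mod 24)`. -/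
def chi1 (n : ℕ) : ℤ :=
  if n % 24 = 1 ∨ n % 24 = 23 then 1 else if n % 24 = 7 ∨ n % 24 = 17 then -1 else 0

/-- `H⁽⁰⁾(x) = ∑_{n≥0} χ₂₄⁽⁰⁾(n) q^{(n²-25)/48} x^{(n-5)/2}`. -/
def H0 : Rqx := ∑' n : ℕ, (chi0 n : Rqx) * Qc ^ ((n ^ 2 - 25) / 48) * Xx ^ ((n - 5) / 2)

/-- `H⁽¹⁾(x) = ∑_{n≥0} χ₂₄⁽¹⁾(n) q^{(n²-1)/48} x^{(n-1)/2}`. -/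
def H1 : Rqx := ∑' n : ℕ, (chi1 n : Rqx) * Qc ^ ((n ^ 2 - 1) / 48) * Xx ^ ((n - 1) / 2)

open PowerSeries

lemma hasSum_coeff {R : Type*} [Semiring R] [TopologicalSpace R]
    {f : ℕ → PowerSeries R} {a : PowerSeries R} :
    HasSum f a ↔ ∀ k, HasSum (fun n => coeff (R := R) k (f n)) (coeff (R := R) k a) := by
  rw [← Pi.hasSum (f := fun n (k : ℕ) => coeff (R := R) k (f n)) (g := fun k => coeff (R := R) k a)]
  unfold HasSum
  rw [nhds_induced (fun f (n : ℕ) => (PowerSeries.coeff (R := R) n) f) a, Filter.tendsto_comap_iff]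
  apply Filter.tendsto_congr
  intro s
  funext k
  simp

instance {R : Type*} [Semiring R] [TopologicalSpace R] [T2Space R] :
    T2Space (PowerSeries R) := by
  have h : Topology.IsEmbedding (fun f (n : ℕ) => (PowerSeries.coeff (R := R) n) f) := by
    refine ⟨⟨rfl⟩, ?_⟩
    intro f g hfg
    ext n
    exact congrFun hfg n
  exact h.t2Space

lemma Qc_pow (e : ℕ) : Qc ^ e = PowerSeries.C (R := PowerSeries ℚ) (PowerSeries.X ^ e) := by
  rw [Qc, ← map_pow]

lemma coeff_mono (e m k : ℕ) :
    coeff (R := PowerSeries ℚ) k (Qc ^ e * Xx ^ m) =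
      if k = m then (X : PowerSeries ℚ) ^ e else 0 := by
  rw [Qc_pow]; unfold Xx; rw [coeff_C_mul, coeff_X_pow]
  split <;> simp

lemma coeff_mono1 (m k : ℕ) :
    coeff (R := PowerSeries ℚ) k (Qc * Xx ^ m) =
      if k = m then (X : PowerSeries ℚ) else 0 := by
  rw [show Qc * Xx ^ m = Qc ^ 1 * Xx ^ m from by ring, coeff_mono, pow_one]

lemma coeff_term (z : ℤ) (e m k : ℕ) :
    coeff (R := PowerSeries ℚ) k ((z : Rqx) * Qc ^ e * Xx ^ m) =
      if k = m then (z : PowerSeries ℚ) * X ^ e else 0 := by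
  have hz : (z : Rqx) = PowerSeries.C (R := PowerSeries ℚ) ((z : ℤ) : PowerSeries ℚ) := by
    rw [map_intCast]
  rw [hz, mul_assoc, coeff_C_mul, coeff_mono]
  split <;> simp

lemma coeff_third (e m : ℕ) (f : Rqx) (j : ℕ) :
    coeff (R := PowerSeries ℚ) (j + m) (Qc ^ e * Xx ^ m * f) =
      (X : PowerSeries ℚ) ^ e * coeff (R := PowerSeries ℚ) j f := by
  rw [show Qc ^ e * Xx ^ m * f = Xx ^ m * (Qc ^ e * f) by ring]
  unfold Xx
  rw [coeff_X_pow_mul, Qc_pow, coeff_C_mul]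

lemma coeff_third_small (e m : ℕ) (f : Rqx) (k : ℕ) (h : k < m) :
    coeff (R := PowerSeries ℚ) k (Qc ^ e * Xx ^ m * f) = 0 := by
  have hd : (X : Rqx) ^ m ∣ Qc ^ e * Xx ^ m * f := ⟨Qc ^ e * f, by unfold Xx; ring⟩
  exact X_pow_dvd_iff.mp hd k h

def c0fun (k : ℕ) : PowerSeries ℚ :=
  (chi0 (2*k+5) : PowerSeries ℚ) * X ^ ((k^2+5*k)/12)

def c1fun (k : ℕ) : PowerSeries ℚ :=
  (chi1 (2*k+1) : PowerSeries ℚ) * X ^ ((k^2+k)/12)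

lemma H0_eq : H0 = PowerSeries.mk c0fun := by
  unfold H0
  apply HasSum.tsum_eq
  rw [hasSum_coeff]
  intro k
  have h0 : ∀ n, n ≠ 2*k+5 →
      coeff (R := PowerSeries ℚ) k ((chi0 n : Rqx) * Qc ^ ((n ^ 2 - 25) / 48) * Xx ^ ((n - 5) / 2)) = 0 := by
    intro n hn
    rw [coeff_term]
    split
    · rename_i h
      suffices hz : chi0 n = 0 by simp [hz]
      by_contra hz
      have hmod : n % 24 = 5 ∨ n % 24 = 19 ∨ n % 24 = 11 ∨ n % 24 = 13 := by
        unfold chi0 at hz; split_ifs at hz <;> tauto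
      omega
    · rfl
  have hs := hasSum_single (f := fun n =>
    coeff (R := PowerSeries ℚ) k ((chi0 n : Rqx) * Qc ^ ((n ^ 2 - 25) / 48) * Xx ^ ((n - 5) / 2)))
    (2*k+5) h0
  have hval : coeff (R := PowerSeries ℚ) k
      ((chi0 (2*k+5) : Rqx) * Qc ^ (((2*k+5) ^ 2 - 25) / 48) * Xx ^ (((2*k+5) - 5) / 2)) =
      coeff (R := PowerSeries ℚ) k (PowerSeries.mk c0fun) := by
    rw [coeff_term, coeff_mk]
    have h1 : ((2*k+5) - 5)/2 = k := by omega
    have h2 : ((2*k+5)^2 - 25)/48 = (k^2+5*k)/12 := by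
      rw [show (2*k+5)^2 = (k^2+5*k)*4 + 25 from by ring]
      generalize k^2+5*k = m
      omega
    rw [h1, h2, if_pos rfl]
    rfl
  rw [← hval]
  exact hs

lemma H1_eq : H1 = PowerSeries.mk c1fun := by
  unfold H1
  apply HasSum.tsum_eq
  rw [hasSum_coeff]
  intro k
  have h0 : ∀ n, n ≠ 2*k+1 →
      coeff (R := PowerSeries ℚ) k ((chi1 n : Rqx) * Qc ^ ((n ^ 2 - 1) / 48) * Xx ^ ((n - 1) / 2)) = 0 := by
    intro n hn
    rw [coeff_term]
    split
    · rename_i h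
      suffices hz : chi1 n = 0 by simp [hz]
      by_contra hz
      have hmod : n % 24 = 1 ∨ n % 24 = 23 ∨ n % 24 = 7 ∨ n % 24 = 17 := by
        unfold chi1 at hz; split_ifs at hz <;> tauto
      omega
    · rfl
  have hs := hasSum_single (f := fun n =>
    coeff (R := PowerSeries ℚ) k ((chi1 n : Rqx) * Qc ^ ((n ^ 2 - 1) / 48) * Xx ^ ((n - 1) / 2)))
    (2*k+1) h0
  have hval : coeff (R := PowerSeries ℚ) k
      ((chi1 (2*k+1) : Rqx) * Qc ^ (((2*k+1) ^ 2 - 1) / 48) * Xx ^ (((2*k+1) - 1) / 2)) =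
      coeff (R := PowerSeries ℚ) k (PowerSeries.mk c1fun) := by
    rw [coeff_term, coeff_mk]
    have h1 : ((2*k+1) - 1)/2 = k := by omega
    have h2 : ((2*k+1)^2 - 1)/48 = (k^2+k)/12 := by
      rw [show (2*k+1)^2 = (k^2+k)*4 + 1 from by ring]
      generalize k^2+k = m
      omega
    rw [h1, h2, if_pos rfl]
    rfl
  rw [← hval]
  exact hs

lemma chi_rel0 (j : ℕ) : chi0 (2*j+13) = - chi1 (2*j+1) := by
  unfold chi0 chi1
  split_ifs <;> omega

lemma chi_rel1 (j : ℕ) : chi1 (2*j+17) = - chi0 (2*j+5) := by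
  unfold chi0 chi1
  split_ifs <;> omega

/-- The $q$-difference equations
`H⁽⁰⁾(x) = 1 - q²x³ - q³x⁴ H⁽¹⁾(qx)` and `H⁽¹⁾(x) = 1 - qx³ - q⁶x⁸ H⁽⁰⁾(qx)`,
where substituting `qx` for `x` is `PowerSeries.rescale q`. -/
theorem H_q_difference :
    H0 = 1 - Qc ^ 2 * Xx ^ 3 -
        Qc ^ 3 * Xx ^ 4 * PowerSeries.rescale (PowerSeries.X : PowerSeries ℚ) H1 ∧
      H1 = 1 - Qc * Xx ^ 3 -
        Qc ^ 6 * Xx ^ 8 * PowerSeries.rescale (PowerSeries.X : PowerSeries ℚ) H0 := by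
  constructor
  · rw [H0_eq, H1_eq]
    refine PowerSeries.ext fun k => ?_
    rw [map_sub, map_sub, coeff_mk]
    rcases lt_or_ge k 4 with hk | hk
    · rw [coeff_third_small 3 4 _ k hk, coeff_one, coeff_mono]
      interval_cases k <;> norm_num [c0fun, chi0]
    · obtain ⟨j, rfl⟩ : ∃ j, k = j + 4 := ⟨k - 4, by omega⟩
      rw [coeff_third 3 4 _ j, coeff_rescale, coeff_mk,
          coeff_one, if_neg (by omega), coeff_mono, if_neg (by omega)]
      unfold c0fun c1fun
      rw [show 2*(j+4)+5 = 2*j+13 from by ring, chi_rel0,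
          show (j+4)^2+5*(j+4) = (j^2+j) + 12*(j+3) from by ring,
          Nat.add_mul_div_left _ _ (by norm_num : (0:ℕ) < 12)]
      push_cast
      ring
  · rw [H0_eq, H1_eq]
    refine PowerSeries.ext fun k => ?_
    rw [map_sub, map_sub, coeff_mk]
    rcases lt_or_ge k 8 with hk | hk
    · rw [coeff_third_small 6 8 _ k hk, coeff_one, coeff_mono1]
      interval_cases k <;> norm_num [c1fun, chi1]
    · obtain ⟨j, rfl⟩ : ∃ j, k = j + 8 := ⟨k - 8, by omega⟩
      rw [coeff_third 6 8 _ j, coeff_rescale, coeff_mk,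
          coeff_one, if_neg (by omega),
          coeff_mono1, if_neg (by omega)]
      unfold c0fun c1fun
      rw [show 2*(j+8)+1 = 2*j+17 from by ring, chi_rel1,
          show (j+8)^2+(j+8) = (j^2+5*j) + 12*(j+6) from by ring,
          Nat.add_mul_div_left _ _ (by norm_num : (0:ℕ) < 12)]
      push_cast
      ring
end
end

section
/- The generating function identity sinh(3x)·sinh(8x)/sinh(12x) = (1/2) \sum_{n=0}^{\infty} χ₂₄⁽¹⁾(n) e^{-nx} holds for all real x > 0. -/
/-- `sinh(3x)·sinh(8x)/sinh(12x) = (1/2) ∑_{n≥0} χ₂₄⁽¹⁾(n) e^{-nx}` for all real `x > 0`. -/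
theorem sinh_gen_fun_chi1 (x : ℝ) (hx : 0 < x) :
    Real.sinh (3 * x) * Real.sinh (8 * x) / Real.sinh (12 * x) =
      (1 / 2) * ∑' n : ℕ, (chi1 n : ℝ) * Real.exp (-(n : ℝ) * x) := by
  set q : ℝ := Real.exp (-x) with hq
  have hq0 : 0 < q := Real.exp_pos _
  have hq1 : q < 1 := by
    rw [hq, Real.exp_lt_one_iff]; linarith
  have hexp : ∀ n : ℕ, Real.exp (-(n : ℝ) * x) = q ^ n := by
    intro n
    rw [hq, ← Real.exp_nat_mul]
    congr 1; ring
  have hsum : Summable (fun n : ℕ => (chi1 n : ℝ) * q ^ n) := by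
    apply Summable.of_norm_bounded (summable_geometric_of_lt_one hq0.le hq1)
    intro n
    rw [norm_mul, norm_pow, Real.norm_of_nonneg hq0.le]
    have : ‖((chi1 n : ℝ))‖ ≤ 1 := by
      unfold chi1; split_ifs <;> simp
    nlinarith [pow_nonneg hq0.le n]
  have key : ∑' n : ℕ, (chi1 n : ℝ) * q ^ n
      = (q - q ^ 7 - q ^ 17 + q ^ 23) * (1 - q ^ 24)⁻¹ := by
    rw [← (Nat.divModEquiv 24).symm.tsum_eq (fun n => (chi1 n : ℝ) * q ^ n)]
    have heq : ∀ p : ℕ × Fin 24,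
        (chi1 ((Nat.divModEquiv 24).symm p) : ℝ) * q ^ (((Nat.divModEquiv 24).symm p : ℕ))
        = ((chi1 p.2 : ℝ) * q ^ (p.2 : ℕ)) * (q ^ 24) ^ p.1 := by
      rintro ⟨k, r⟩
      have h1 : ((Nat.divModEquiv 24).symm (k, r) : ℕ) = k * 24 + r := rfl
      have h2 : chi1 (k * 24 + r) = chi1 r := by
        unfold chi1
        have : (k * 24 + (r : ℕ)) % 24 = (r : ℕ) % 24 := by omega
        rw [this]
      rw [h1, h2, pow_add, ← pow_mul]
      ring
    calc ∑' p : ℕ × Fin 24,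
          (chi1 ((Nat.divModEquiv 24).symm p) : ℝ) * q ^ (((Nat.divModEquiv 24).symm p : ℕ))
        = ∑' p : ℕ × Fin 24, ((chi1 p.2 : ℝ) * q ^ (p.2 : ℕ)) * (q ^ 24) ^ p.1 := by
          exact tsum_congr heq
      _ = ∑' k : ℕ, ∑' r : Fin 24, ((chi1 r : ℝ) * q ^ (r : ℕ)) * (q ^ 24) ^ k := by
          apply Summable.tsum_prod
          have : Summable ((fun n : ℕ => (chi1 n : ℝ) * q ^ n) ∘ (Nat.divModEquiv 24).symm) :=
            (Nat.divModEquiv 24).symm.summable_iff.mpr hsum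
          refine this.congr fun p => ?_
          exact heq p
      _ = ∑' k : ℕ, (∑ r : Fin 24, (chi1 r : ℝ) * q ^ (r : ℕ)) * (q ^ 24) ^ k := by
          refine tsum_congr fun k => ?_
          rw [tsum_fintype, ← Finset.sum_mul]
      _ = (∑ r : Fin 24, (chi1 r : ℝ) * q ^ (r : ℕ)) * ∑' k : ℕ, (q ^ 24) ^ k := tsum_mul_left
      _ = (q - q ^ 7 - q ^ 17 + q ^ 23) * (1 - q ^ 24)⁻¹ := by
          rw [tsum_geometric_of_lt_one (by positivity) (by nlinarith [pow_lt_one₀ hq0.le hq1 (n := 24) (by norm_num)])]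
          congr 1
          simp [Fin.sum_univ_succ, chi1]
          ring
  have hrw : (∑' n : ℕ, (chi1 n : ℝ) * Real.exp (-(n : ℝ) * x)) =
      (q - q ^ 7 - q ^ 17 + q ^ 23) * (1 - q ^ 24)⁻¹ := by
    rw [← key]; exact tsum_congr fun n => by rw [hexp]
  rw [hrw]
  have hE : Real.exp x = q⁻¹ := by rw [hq, ← Real.exp_neg, neg_neg]
  have hsinh : ∀ k : ℕ, Real.sinh ((k : ℝ) * x) = (q⁻¹ ^ k - q ^ k) / 2 := by
    intro k
    rw [Real.sinh_eq, show -((k : ℝ) * x) = (k : ℝ) * (-x) by ring,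
      Real.exp_nat_mul, Real.exp_nat_mul, ← hq, hE]
  have h3 := hsinh 3; have h8 := hsinh 8; have h12 := hsinh 12
  norm_num at h3 h8 h12
  have hs12 : Real.sinh (12 * x) ≠ 0 := ne_of_gt (Real.sinh_pos_iff.mpr (by linarith))
  rw [div_eq_iff hs12, h3, h8, h12]
  have h24 : q ^ 24 < 1 := pow_lt_one₀ hq0.le hq1 (by norm_num)
  have hne1 : (1 : ℝ) - q ^ 24 ≠ 0 := by nlinarith
  have hqne : q ≠ 0 := hq0.ne'
  have hden : (q ^ 12)⁻¹ - q ^ 12 ≠ 0 := by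
    have h12' : q ^ 12 < 1 := pow_lt_one₀ hq0.le hq1 (by norm_num)
    have : (1 : ℝ) < (q ^ 12)⁻¹ := (one_lt_inv₀ (by positivity)).mpr h12'
    linarith
  have hne2 : q ^ 11 * 4 - q ^ 35 * 4 ≠ 0 := by
    have h : q ^ 11 * 4 - q ^ 35 * 4 = 4 * q ^ 11 * (1 - q ^ 24) := by ring
    rw [h]
    exact mul_ne_zero (by positivity) hne1
  field_simp
  ring
end
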